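/- Let n be an even positive integer. Then (1/2)·C(n, n/2) is an odd integer if n is a power of 2, and an even integer otherwise. -/

import Mathlib

lemma digits2_pos {m : ℕ} (hm : 0 < m) : 0 < (Nat.digits 2 m).sum := by
  induction m using Nat.strong_induction_on with
  | _ m ih =>
    rw [Nat.digits_def' (by norm_num : 1 < 2) hm, List.sum_cons]
    rcases Nat.even_or_odd m with he | ho
    · have he' : m % 2 = 0 := Nat.even_iff.mp he
      have h2 : 0 < m / 2 := Nat.div_pos (by omega) (by norm_num)
      have := ih (m / 2) (by omega) h2
      omega
    · have : m % 2 = 1 := Nat.odd_iff.mp ho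
      omega

lemma digits2_sum_one_iff {m : ℕ} (hm : 0 < m) :
    (Nat.digits 2 m).sum = 1 ↔ ∃ k, m = 2 ^ k := by
  induction m using Nat.strong_induction_on with
  | _ m ih =>
    rcases eq_or_lt_of_le (show 1 ≤ m from hm) with h1 | h1
    · simp [← h1]
      exact ⟨0, rfl⟩
    rw [Nat.digits_def' (by norm_num : 1 < 2) hm, List.sum_cons]
    have h2 : 0 < m / 2 := Nat.div_pos (by omega) (by norm_num)
    rcases Nat.even_or_odd m with he | ho
    · have hm2 : m % 2 = 0 := Nat.even_iff.mp he
      rw [hm2, Nat.zero_add, ih (m / 2) (by omega) h2]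
      constructor
      · rintro ⟨k, hk⟩; exact ⟨k + 1, by omega⟩
      · rintro ⟨k, hk⟩
        rcases k with _ | k
        · omega
        · exact ⟨k, by subst hk; simp [pow_succ, Nat.mul_div_cancel_left]⟩
    · have hm2 : m % 2 = 1 := Nat.odd_iff.mp ho
      have := digits2_pos h2
      constructor
      · omega
      · rintro ⟨k, hk⟩
        rcases k with _ | k
        · omega
        · exfalso; subst hk; simp [pow_succ] at hm2

lemma digits2_sum_double {m : ℕ} (hm : 0 < m) :
    (Nat.digits 2 (2 * m)).sum = (Nat.digits 2 m).sum := by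
  rw [Nat.digits_def' (by norm_num : 1 < 2) (by omega), List.sum_cons]
  simp [Nat.mul_div_cancel_left, Nat.mul_mod_right]

theorem stmt_0 (n : ℕ) (hn : 0 < n) (hev : Even n) :
    2 ∣ n.choose (n / 2) ∧
    ((∃ k : ℕ, n = 2 ^ k) → Odd (n.choose (n / 2) / 2)) ∧
    ((¬ ∃ k : ℕ, n = 2 ^ k) → Even (n.choose (n / 2) / 2)) := by
  obtain ⟨m, hm⟩ := hev
  have hm' : n = 2 * m := by omega
  have hmpos : 0 < m := by omega
  have hnd : n / 2 = m := by omega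
  subst hm'
  rw [hnd]
  set c := (2 * m).choose m with hc
  have hcpos : 0 < c := Nat.choose_pos (by omega)
  haveI : Fact (Nat.Prime 2) := ⟨Nat.prime_two⟩
  -- Kummer
  have hkum := sub_one_mul_padicValNat_choose_eq_sub_sum_digits (p := 2)
    (k := m) (n := 2 * m) (by omega)
  have hsub : 2 * m - m = m := by omega
  rw [hsub, digits2_sum_double hmpos, ← hc] at hkum
  have hv : padicValNat 2 c = (Nat.digits 2 m).sum := by omega
  have hvpos : 0 < padicValNat 2 c := hv ▸ digits2_pos hmpos
  have hdvd : ∀ i : ℕ, 2 ^ i ∣ c ↔ i ≤ padicValNat 2 c := by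
    intro i
    rw [← Nat.factorization_def c Nat.prime_two]
    exact Nat.Prime.pow_dvd_iff_le_factorization Nat.prime_two (by omega)
  have h2c : 2 ∣ c := by
    have := (hdvd 1).mpr hvpos
    simpa using this
  refine ⟨h2c, ?_, ?_⟩
  · rintro ⟨k, hk⟩
    -- m is a power of 2
    have hmk : ∃ j, m = 2 ^ j := by
      rcases k with _ | k
      · omega
      · exact ⟨k, by rw [pow_succ] at hk; omega⟩
    have hsum1 : (Nat.digits 2 m).sum = 1 := (digits2_sum_one_iff hmpos).mpr hmk
    rw [Nat.odd_iff, ← Nat.two_dvd_ne_zero]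
    intro h4
    have : 2 ^ 2 ∣ c := by
      obtain ⟨t, ht⟩ := h4
      obtain ⟨s, hs⟩ := h2c
      exact ⟨t, by omega⟩
    rw [hdvd 2, hv, hsum1] at this
    omega
  · intro hnk
    have hmk : ¬ ∃ j, m = 2 ^ j := by
      rintro ⟨j, hj⟩
      exact hnk ⟨j + 1, by rw [pow_succ]; omega⟩
    have hsum1 : (Nat.digits 2 m).sum ≠ 1 := fun h =>
      hmk ((digits2_sum_one_iff hmpos).mp h)
    have h2le : 2 ≤ padicValNat 2 c := by
      have := digits2_pos hmpos
      omega
    have h4 : 2 ^ 2 ∣ c := (hdvd 2).mpr h2le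
    obtain ⟨t, ht⟩ := h4
    exact ⟨t, by omega⟩
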